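/- Let S² be the unit sphere in ℝ³, let T_{γ₁} be the rotation of S² about the z-axis by angle 2πγ₁, and let R_{γ₂} be the rotation of S² about the x-axis by angle 2πγ₂, where γ₁ and γ₂ are irrational. Then the IFS(S²; T_{γ₁}, R_{γ₂}) is minimal: every nonempty closed subset C ⊆ S² with T_{γ₁}(C) ⊆ C and R_{γ₂}(C) ⊆ C equals S². The same conclusion holds for the inverse family {T_{γ₁}⁻¹, R_{γ₂}⁻¹}. -/

import Mathlib

open Metric MeasureTheory Set

/-- Rotation of `ℝ³` about the `z`-axis by angle `θ`. -/
noncomputable def rotZ (θ : ℝ) (v : EuclideanSpace ℝ (Fin 3)) : EuclideanSpace ℝ (Fin 3) :=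
  WithLp.toLp 2 ![v 0 * Real.cos θ - v 1 * Real.sin θ, v 0 * Real.sin θ + v 1 * Real.cos θ, v 2]

/-- Rotation of `ℝ³` about the `x`-axis by angle `θ`. -/
noncomputable def rotX (θ : ℝ) (v : EuclideanSpace ℝ (Fin 3)) : EuclideanSpace ℝ (Fin 3) :=
  WithLp.toLp 2 ![v 0, v 1 * Real.cos θ - v 2 * Real.sin θ, v 1 * Real.sin θ + v 2 * Real.cos θ]

open Real


lemma dense_int {γ : ℝ} (hγ : Irrational γ) (t ε : ℝ) (hε : 0 < ε) :
    ∃ m k : ℤ, |m * γ + k - t| < ε := by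
  rcases AddSubgroup.dense_or_cyclic (AddSubgroup.closure {γ, 1}) with hd | ⟨a, ha⟩
  · have ht := hd t
    rw [Metric.mem_closure_iff] at ht
    obtain ⟨y, hy, hdist⟩ := ht ε hε
    rw [SetLike.mem_coe, AddSubgroup.mem_closure_pair] at hy
    obtain ⟨m, n, rfl⟩ := hy
    refine ⟨m, n, ?_⟩
    rw [Real.dist_eq, abs_sub_comm] at hdist
    simpa [zsmul_eq_mul] using hdist
  · exfalso
    have hγm : γ ∈ AddSubgroup.closure ({γ, 1} : Set ℝ) :=
      AddSubgroup.subset_closure (by simp)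
    have h1m : (1:ℝ) ∈ AddSubgroup.closure ({γ, 1} : Set ℝ) :=
      AddSubgroup.subset_closure (by simp)
    rw [ha, AddSubgroup.mem_closure_singleton] at hγm h1m
    obtain ⟨m, hm⟩ := hγm
    obtain ⟨n, hn⟩ := h1m
    rw [zsmul_eq_mul] at hm hn
    have hn0 : (n:ℝ) ≠ 0 := by
      rintro h
      rw [h, zero_mul] at hn; exact one_ne_zero hn.symm
    have hq : γ = ((m : ℚ) / (n : ℚ) : ℚ) := by
      push_cast
      rw [eq_div_iff hn0, ← hm]
      have ha' : a = 1 / n := by field_simp [eq_comm] at hn ⊢; linarith [hn]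
      rw [ha']; field_simp
    exact hγ ⟨_, hq.symm⟩

lemma small_step {γ : ℝ} (hγ : Irrational γ) (ε : ℝ) (hε : 0 < ε) :
    ∃ m k : ℤ, m ≠ 0 ∧ 0 < m * γ + k ∧ m * γ + k < min ε 1 := by
  set ε₁ := min ε 1 with hε₁
  have hε₁0 : 0 < ε₁ := lt_min hε one_pos
  obtain ⟨m, k, h⟩ := dense_int hγ (ε₁/2) (ε₁/2) (by linarith)
  rw [abs_lt] at h
  refine ⟨m, k, ?_, by linarith [h.1], by linarith [h.2]⟩
  rintro rfl
  have h1 : (0:ℝ) < k := by push_cast at h ⊢; linarith [h.1]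
  have h2 : (k:ℝ) < 1 := by push_cast at h ⊢; have := min_le_right ε 1; linarith [h.2]
  have : (0:ℤ) < k := by exact_mod_cast h1
  have : (k:ℤ) < 1 := by exact_mod_cast h2
  omega

lemma dense_nat {γ : ℝ} (hγ : Irrational γ) (t ε : ℝ) (hε : 0 < ε) :
    ∃ n : ℕ, ∃ K : ℤ, |n * γ - K - t| < ε := by
  obtain ⟨m, k, hm0, hpos, hlt⟩ := small_step hγ ε hε
  set δ := m * γ + k with hδ
  have hδε : δ < ε := lt_of_lt_of_le hlt (min_le_left _ _)
  set t' := Int.fract t with ht'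
  have ht'0 : 0 ≤ t' := Int.fract_nonneg t
  have ht'1 : t' < 1 := Int.fract_lt_one t
  rcases lt_or_gt_of_ne hm0 with hneg | hpos'
  · -- m < 0 : d = -m, d*γ = -m*γ = k - δ...  n*γ = j*k - j*δ
    set d := m.natAbs with hd
    have hdm : (d:ℝ) = -(m:ℝ) := by
      have h' : (d:ℤ) = -m := by omega
      exact_mod_cast h'
    set t'' := 1 - t' with ht''
    have ht''0 : 0 < t'' := by linarith
    set j := ⌈t'' / δ⌉₊ with hj
    have hjge : t'' ≤ j * δ := by
      rw [← div_le_iff₀ hpos]; exact Nat.le_ceil _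
    have hjlt : (j:ℝ) * δ < t'' + δ := by
      have := Nat.ceil_lt_add_one (by positivity : (0:ℝ) ≤ t''/δ)
      calc (j:ℝ) * δ < (t''/δ + 1) * δ := by
            apply mul_lt_mul_of_pos_right _ hpos; exact this
        _ = t'' + δ := by field_simp
    refine ⟨j * d, j * k - 1 - ⌊t⌋, ?_⟩
    have hnγ : ((j*d : ℕ):ℝ) * γ = j * k - j * δ := by
      push_cast [hdm]
      have : (m:ℝ) * γ = δ - k := by rw [hδ]; ring
      nlinarith [this]
    rw [hnγ]
    have htt : (⌊t⌋:ℝ) + t' = t := Int.floor_add_fract t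
    push_cast
    rw [abs_lt]
    constructor <;> linarith [hjge, hjlt, htt, hδε]
  · -- m > 0
    set d := m.natAbs with hd
    have hdm : (d:ℝ) = (m:ℝ) := by
      have h' : (d:ℤ) = m := by omega
      exact_mod_cast h'
    set j := ⌈t' / δ⌉₊ with hj
    have hjge : t' ≤ j * δ := by
      rw [← div_le_iff₀ hpos]; exact Nat.le_ceil _
    have hjlt : (j:ℝ) * δ < t' + δ := by
      have := Nat.ceil_lt_add_one (by positivity : (0:ℝ) ≤ t'/δ)
      calc (j:ℝ) * δ < (t'/δ + 1) * δ := by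
            apply mul_lt_mul_of_pos_right _ hpos; exact this
        _ = t' + δ := by field_simp
    refine ⟨j * d, -(j * k) - ⌊t⌋, ?_⟩
    have hnγ : ((j*d : ℕ):ℝ) * γ = -(j * k) + j * δ := by
      push_cast [hdm]
      have : (m:ℝ) * γ = δ - k := by rw [hδ]; ring
      nlinarith [this]
    rw [hnγ]
    have htt : (⌊t⌋:ℝ) + t' = t := Int.floor_add_fract t
    push_cast
    rw [abs_lt]
    constructor <;> linarith [hjge, hjlt, htt, hδε]

lemma vext (v w : EuclideanSpace ℝ (Fin 3)) (h0 : v 0 = w 0) (h1 : v 1 = w 1) (h2 : v 2 = w 2) : v = w := by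
  ext i; fin_cases i <;> assumption

@[simp] lemma rotZ0 (θ:ℝ) (v : EuclideanSpace ℝ (Fin 3)) : rotZ θ v 0 = v 0 * Real.cos θ - v 1 * Real.sin θ := rfl
@[simp] lemma rotZ1 (θ:ℝ) (v : EuclideanSpace ℝ (Fin 3)) : rotZ θ v 1 = v 0 * Real.sin θ + v 1 * Real.cos θ := rfl
@[simp] lemma rotZ2 (θ:ℝ) (v : EuclideanSpace ℝ (Fin 3)) : rotZ θ v 2 = v 2 := rfl
@[simp] lemma rotX0 (θ:ℝ) (v : EuclideanSpace ℝ (Fin 3)) : rotX θ v 0 = v 0 := rfl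
@[simp] lemma rotX1 (θ:ℝ) (v : EuclideanSpace ℝ (Fin 3)) : rotX θ v 1 = v 1 * Real.cos θ - v 2 * Real.sin θ := rfl
@[simp] lemma rotX2 (θ:ℝ) (v : EuclideanSpace ℝ (Fin 3)) : rotX θ v 2 = v 1 * Real.sin θ + v 2 * Real.cos θ := rfl

lemma rotZ_zero (v : EuclideanSpace ℝ (Fin 3)) : rotZ 0 v = v := by
  apply vext <;> simp

lemma rotZ_rotZ (a b : ℝ) (v : EuclideanSpace ℝ (Fin 3)) : rotZ a (rotZ b v) = rotZ (b + a) v := by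
  apply vext <;> simp [Real.cos_add, Real.sin_add] <;> ring

lemma rotX_zero (v : EuclideanSpace ℝ (Fin 3)) : rotX 0 v = v := by
  apply vext <;> simp

lemma rotX_rotX (a b : ℝ) (v : EuclideanSpace ℝ (Fin 3)) : rotX a (rotX b v) = rotX (b + a) v := by
  apply vext <;> simp [Real.cos_add, Real.sin_add] <;> ring

lemma rotZ_iterate (β : ℝ) (n : ℕ) (v : EuclideanSpace ℝ (Fin 3)) :
    (rotZ β)^[n] v = rotZ (n * β) v := by
  induction n with
  | zero => simp [rotZ_zero]
  | succ n ih =>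
    rw [Function.iterate_succ_apply', ih, rotZ_rotZ]
    push_cast; ring_nf

lemma rotX_iterate (β : ℝ) (n : ℕ) (v : EuclideanSpace ℝ (Fin 3)) :
    (rotX β)^[n] v = rotX (n * β) v := by
  induction n with
  | zero => simp [rotX_zero]
  | succ n ih =>
    rw [Function.iterate_succ_apply', ih, rotX_rotX]
    push_cast; ring_nf

lemma rotZ_period (a : ℝ) (k : ℤ) (v : EuclideanSpace ℝ (Fin 3)) :
    rotZ (a - k * (2 * Real.pi)) v = rotZ a v := by
  apply vext <;> simp [Real.cos_sub_int_mul_two_pi, Real.sin_sub_int_mul_two_pi]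

lemma rotX_period (a : ℝ) (k : ℤ) (v : EuclideanSpace ℝ (Fin 3)) :
    rotX (a - k * (2 * Real.pi)) v = rotX a v := by
  apply vext <;> simp [Real.cos_sub_int_mul_two_pi, Real.sin_sub_int_mul_two_pi]

lemma abs_sin_le_abs (x : ℝ) : |Real.sin x| ≤ |x| := by
  rcases eq_or_ne x 0 with rfl | h
  · simp
  · exact (Real.abs_sin_lt_abs h).le

lemma abs_cos_sub_cos (a b : ℝ) : |Real.cos a - Real.cos b| ≤ |a - b| := by
  rw [Real.cos_sub_cos]
  have e : |(-2) * Real.sin ((a+b)/2) * Real.sin ((a-b)/2)|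
      = 2 * |Real.sin ((a+b)/2)| * |Real.sin ((a-b)/2)| := by
    rw [abs_mul, abs_mul]; simp [abs_of_nonneg]
  rw [e]
  have h1 : |Real.sin ((a+b)/2)| ≤ 1 := Real.abs_sin_le_one _
  have h2 : |Real.sin ((a-b)/2)| ≤ |a-b|/2 := by
    have := abs_sin_le_abs ((a-b)/2)
    rwa [abs_div, abs_two] at this
  nlinarith [abs_nonneg (Real.sin ((a-b)/2)), abs_nonneg (Real.sin ((a+b)/2))]

lemma abs_sin_sub_sin (a b : ℝ) : |Real.sin a - Real.sin b| ≤ |a - b| := by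
  rw [Real.sin_sub_sin]
  have e : |2 * Real.sin ((a-b)/2) * Real.cos ((a+b)/2)|
      = 2 * |Real.sin ((a-b)/2)| * |Real.cos ((a+b)/2)| := by
    rw [abs_mul, abs_mul]; simp [abs_of_nonneg]
  rw [e]
  have h1 : |Real.cos ((a+b)/2)| ≤ 1 := Real.abs_cos_le_one _
  have h2 : |Real.sin ((a-b)/2)| ≤ |a-b|/2 := by
    have := abs_sin_le_abs ((a-b)/2)
    rwa [abs_div, abs_two] at this
  nlinarith [abs_nonneg (Real.sin ((a-b)/2)), abs_nonneg (Real.cos ((a+b)/2))]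

lemma coord_le_one (v : EuclideanSpace ℝ (Fin 3)) (hv : v ∈ sphere (0:EuclideanSpace ℝ (Fin 3)) 1)
    (i : Fin 3) : |v i| ≤ 1 := by
  have hn : ‖v‖ = 1 := by simpa using hv
  have := EuclideanSpace.norm_eq v
  rw [hn] at this
  have hsum : ∑ j, v j ^ 2 = 1 := by
    have h0 : (0:ℝ) ≤ ∑ j, v j ^ 2 := Finset.sum_nonneg fun j _ => sq_nonneg _
    have := congrArg (· ^ 2) this.symm
    simpa [Real.sq_sqrt h0] using this
  have hle : v i ^ 2 ≤ 1 := by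
    rw [← hsum]
    exact Finset.single_le_sum (fun j _ => sq_nonneg (v j)) (Finset.mem_univ i)
  rw [← Real.sqrt_one, ← Real.sqrt_sq_eq_abs]
  exact Real.sqrt_le_sqrt (by simpa using hle)

lemma tri_abs (x y : ℝ) : |x - y| ≤ |x| + |y| := by
  simpa [sub_eq_add_neg, abs_neg] using abs_add_le x (-y)

lemma dist_rotZ (a b : ℝ) (v : EuclideanSpace ℝ (Fin 3))
    (hv : v ∈ sphere (0:EuclideanSpace ℝ (Fin 3)) 1) :
    dist (rotZ a v) (rotZ b v) ≤ 4 * |a - b| := by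
  have h0 := coord_le_one v hv 0
  have h1 := coord_le_one v hv 1
  have hc := abs_cos_sub_cos a b
  have hs := abs_sin_sub_sin a b
  have habs0 := abs_nonneg (v 0)
  have habs1 := abs_nonneg (v 1)
  have e0 : dist (rotZ a v 0) (rotZ b v 0) ≤ 2 * |a - b| := by
    rw [Real.dist_eq, rotZ0, rotZ0]
    have e : (v 0 * Real.cos a - v 1 * Real.sin a) - (v 0 * Real.cos b - v 1 * Real.sin b)
        = v 0 * (Real.cos a - Real.cos b) - v 1 * (Real.sin a - Real.sin b) := by ring
    rw [e]
    calc |v 0 * (Real.cos a - Real.cos b) - v 1 * (Real.sin a - Real.sin b)|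
        ≤ |v 0 * (Real.cos a - Real.cos b)| + |v 1 * (Real.sin a - Real.sin b)| := tri_abs _ _
      _ = |v 0| * |Real.cos a - Real.cos b| + |v 1| * |Real.sin a - Real.sin b| := by
          rw [abs_mul, abs_mul]
      _ ≤ 2 * |a - b| := by nlinarith [abs_nonneg (Real.cos a - Real.cos b), abs_nonneg (Real.sin a - Real.sin b)]
  have e1 : dist (rotZ a v 1) (rotZ b v 1) ≤ 2 * |a - b| := by
    rw [Real.dist_eq, rotZ1, rotZ1]
    have e : (v 0 * Real.sin a + v 1 * Real.cos a) - (v 0 * Real.sin b + v 1 * Real.cos b)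
        = v 0 * (Real.sin a - Real.sin b) - (- v 1) * (Real.cos a - Real.cos b) := by ring
    rw [e]
    calc |v 0 * (Real.sin a - Real.sin b) - (- v 1) * (Real.cos a - Real.cos b)|
        ≤ |v 0 * (Real.sin a - Real.sin b)| + |(- v 1) * (Real.cos a - Real.cos b)| := tri_abs _ _
      _ = |v 0| * |Real.sin a - Real.sin b| + |v 1| * |Real.cos a - Real.cos b| := by
          rw [abs_mul, abs_mul, abs_neg]
      _ ≤ 2 * |a - b| := by nlinarith [abs_nonneg (Real.cos a - Real.cos b), abs_nonneg (Real.sin a - Real.sin b)]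
  have e2 : dist (rotZ a v 2) (rotZ b v 2) = 0 := by simp [Real.dist_eq]
  rw [EuclideanSpace.dist_eq]
  have hsum : ∑ i, dist (rotZ a v i) (rotZ b v i) ^ 2 ≤ (4 * |a - b|) ^ 2 := by
    rw [Fin.sum_univ_three, e2]
    have d0 := dist_nonneg (x := rotZ a v 0) (y := rotZ b v 0)
    have d1 := dist_nonneg (x := rotZ a v 1) (y := rotZ b v 1)
    have hab := abs_nonneg (a - b)
    nlinarith
  calc Real.sqrt (∑ i, dist (rotZ a v i) (rotZ b v i) ^ 2)
      ≤ Real.sqrt ((4 * |a - b|) ^ 2) := Real.sqrt_le_sqrt hsum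
    _ = 4 * |a - b| := Real.sqrt_sq (by positivity)

lemma dist_rotX (a b : ℝ) (v : EuclideanSpace ℝ (Fin 3))
    (hv : v ∈ sphere (0:EuclideanSpace ℝ (Fin 3)) 1) :
    dist (rotX a v) (rotX b v) ≤ 4 * |a - b| := by
  have h0 := coord_le_one v hv 1
  have h1 := coord_le_one v hv 2
  have hc := abs_cos_sub_cos a b
  have hs := abs_sin_sub_sin a b
  have habs0 := abs_nonneg (v 1)
  have habs1 := abs_nonneg (v 2)
  have e0 : dist (rotX a v 1) (rotX b v 1) ≤ 2 * |a - b| := by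
    rw [Real.dist_eq, rotX1, rotX1]
    have e : (v 1 * Real.cos a - v 2 * Real.sin a) - (v 1 * Real.cos b - v 2 * Real.sin b)
        = v 1 * (Real.cos a - Real.cos b) - v 2 * (Real.sin a - Real.sin b) := by ring
    rw [e]
    calc |v 1 * (Real.cos a - Real.cos b) - v 2 * (Real.sin a - Real.sin b)|
        ≤ |v 1 * (Real.cos a - Real.cos b)| + |v 2 * (Real.sin a - Real.sin b)| := tri_abs _ _
      _ = |v 1| * |Real.cos a - Real.cos b| + |v 2| * |Real.sin a - Real.sin b| := by
          rw [abs_mul, abs_mul]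
      _ ≤ 2 * |a - b| := by nlinarith [abs_nonneg (Real.cos a - Real.cos b), abs_nonneg (Real.sin a - Real.sin b)]
  have e1 : dist (rotX a v 2) (rotX b v 2) ≤ 2 * |a - b| := by
    rw [Real.dist_eq, rotX2, rotX2]
    have e : (v 1 * Real.sin a + v 2 * Real.cos a) - (v 1 * Real.sin b + v 2 * Real.cos b)
        = v 1 * (Real.sin a - Real.sin b) - (- v 2) * (Real.cos a - Real.cos b) := by ring
    rw [e]
    calc |v 1 * (Real.sin a - Real.sin b) - (- v 2) * (Real.cos a - Real.cos b)|
        ≤ |v 1 * (Real.sin a - Real.sin b)| + |(- v 2) * (Real.cos a - Real.cos b)| := tri_abs _ _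
      _ = |v 1| * |Real.sin a - Real.sin b| + |v 2| * |Real.cos a - Real.cos b| := by
          rw [abs_mul, abs_mul, abs_neg]
      _ ≤ 2 * |a - b| := by nlinarith [abs_nonneg (Real.cos a - Real.cos b), abs_nonneg (Real.sin a - Real.sin b)]
  have e2 : dist (rotX a v 0) (rotX b v 0) = 0 := by simp [Real.dist_eq]
  rw [EuclideanSpace.dist_eq]
  have hsum : ∑ i, dist (rotX a v i) (rotX b v i) ^ 2 ≤ (4 * |a - b|) ^ 2 := by
    rw [Fin.sum_univ_three, e2]
    have d0 := dist_nonneg (x := rotX a v 1) (y := rotX b v 1)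
    have d1 := dist_nonneg (x := rotX a v 2) (y := rotX b v 2)
    have hab := abs_nonneg (a - b)
    nlinarith
  calc Real.sqrt (∑ i, dist (rotX a v i) (rotX b v i) ^ 2)
      ≤ Real.sqrt ((4 * |a - b|) ^ 2) := Real.sqrt_le_sqrt hsum
    _ = 4 * |a - b| := Real.sqrt_sq (by positivity)

lemma mem_of_approx {C : Set (EuclideanSpace ℝ (Fin 3))} (hC : IsClosed C)
    (x : EuclideanSpace ℝ (Fin 3)) (h : ∀ ε > 0, ∃ y ∈ C, dist x y < ε) : x ∈ C := by
  have : x ∈ closure C := Metric.mem_closure_iff.mpr h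
  rwa [hC.closure_eq] at this

lemma iterate_mem {α : Type*} {C : Set α} {f : α → α} (hinv : f '' C ⊆ C) {x : α} (hx : x ∈ C)
    (n : ℕ) : f^[n] x ∈ C := by
  induction n with
  | zero => simpa using hx
  | succ n ih => rw [Function.iterate_succ_apply']; exact hinv ⟨_, ih, rfl⟩

lemma rotZ_all {γ : ℝ} (hγ : Irrational γ) {C : Set (EuclideanSpace ℝ (Fin 3))}
    (hC : IsClosed C) (hsub : C ⊆ sphere (0:EuclideanSpace ℝ (Fin 3)) 1)
    (hinv : rotZ (2 * Real.pi * γ) '' C ⊆ C) (ψ : ℝ) {x : EuclideanSpace ℝ (Fin 3)}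
    (hx : x ∈ C) : rotZ ψ x ∈ C := by
  have hπ := Real.pi_pos
  apply mem_of_approx hC
  intro ε hε
  obtain ⟨n, k, hnk⟩ := dense_nat hγ (ψ / (2 * Real.pi)) (ε / (16 * Real.pi)) (by positivity)
  refine ⟨(rotZ (2 * Real.pi * γ))^[n] x, iterate_mem hinv hx n, ?_⟩
  rw [rotZ_iterate, ← rotZ_period (n * (2 * Real.pi * γ)) k x]
  have hd := dist_rotZ ψ (n * (2 * Real.pi * γ) - k * (2 * Real.pi)) x (hsub hx)
  have he : ψ - (n * (2 * Real.pi * γ) - k * (2 * Real.pi))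
      = -(2 * Real.pi) * (n * γ - k - ψ / (2 * Real.pi)) := by
    field_simp; ring
  have habs : |ψ - (n * (2 * Real.pi * γ) - k * (2 * Real.pi))|
      = 2 * Real.pi * |n * γ - k - ψ / (2 * Real.pi)| := by
    rw [he, abs_mul, abs_neg, abs_of_pos (by positivity)]
  rw [habs] at hd
  calc dist (rotZ ψ x) (rotZ (n * (2 * Real.pi * γ) - k * (2 * Real.pi)) x)
      ≤ 4 * (2 * Real.pi * |n * γ - k - ψ / (2 * Real.pi)|) := hd
    _ < 4 * (2 * Real.pi * (ε / (16 * Real.pi))) := by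
        have h2 : (0:ℝ) < 2 * Real.pi := by positivity
        gcongr
    _ = ε / 2 := by field_simp; ring
    _ < ε := by linarith

lemma rotX_all {γ : ℝ} (hγ : Irrational γ) {C : Set (EuclideanSpace ℝ (Fin 3))}
    (hC : IsClosed C) (hsub : C ⊆ sphere (0:EuclideanSpace ℝ (Fin 3)) 1)
    (hinv : rotX (2 * Real.pi * γ) '' C ⊆ C) (ψ : ℝ) {x : EuclideanSpace ℝ (Fin 3)}
    (hx : x ∈ C) : rotX ψ x ∈ C := by
  have hπ := Real.pi_pos
  apply mem_of_approx hC
  intro ε hε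
  obtain ⟨n, k, hnk⟩ := dense_nat hγ (ψ / (2 * Real.pi)) (ε / (16 * Real.pi)) (by positivity)
  refine ⟨(rotX (2 * Real.pi * γ))^[n] x, iterate_mem hinv hx n, ?_⟩
  rw [rotX_iterate, ← rotX_period (n * (2 * Real.pi * γ)) k x]
  have hd := dist_rotX ψ (n * (2 * Real.pi * γ) - k * (2 * Real.pi)) x (hsub hx)
  have he : ψ - (n * (2 * Real.pi * γ) - k * (2 * Real.pi))
      = -(2 * Real.pi) * (n * γ - k - ψ / (2 * Real.pi)) := by
    field_simp; ring
  have habs : |ψ - (n * (2 * Real.pi * γ) - k * (2 * Real.pi))|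
      = 2 * Real.pi * |n * γ - k - ψ / (2 * Real.pi)| := by
    rw [he, abs_mul, abs_neg, abs_of_pos (by positivity)]
  rw [habs] at hd
  calc dist (rotX ψ x) (rotX (n * (2 * Real.pi * γ) - k * (2 * Real.pi)) x)
      ≤ 4 * (2 * Real.pi * |n * γ - k - ψ / (2 * Real.pi)|) := hd
    _ < 4 * (2 * Real.pi * (ε / (16 * Real.pi))) := by
        have h2 : (0:ℝ) < 2 * Real.pi := by positivity
        gcongr
    _ = ε / 2 := by field_simp; ring
    _ < ε := by linarith

lemma sphere_sum {v : EuclideanSpace ℝ (Fin 3)} (hv : v ∈ sphere (0:EuclideanSpace ℝ (Fin 3)) 1) :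
    v 0 ^ 2 + v 1 ^ 2 + v 2 ^ 2 = 1 := by
  have hn : ‖v‖ = 1 := by simpa using hv
  have he := EuclideanSpace.norm_eq v
  rw [Fin.sum_univ_three] at he
  simp only [Real.norm_eq_abs, sq_abs] at he
  rw [hn] at he
  have h0 : (0:ℝ) ≤ v 0 ^ 2 + v 1 ^ 2 + v 2 ^ 2 := by positivity
  have hs := Real.sq_sqrt h0
  rw [← he] at hs
  nlinarith [hs]

lemma polar {v : EuclideanSpace ℝ (Fin 3)} (hv : v ∈ sphere (0:EuclideanSpace ℝ (Fin 3)) 1) :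
    ∃ a, rotZ a v = (WithLp.toLp 2 ![0, Real.sqrt (1 - v 2 ^ 2), v 2] : EuclideanSpace ℝ (Fin 3)) := by
  have hsum := sphere_sum hv
  have hr2 : 1 - v 2 ^ 2 = v 0 ^ 2 + v 1 ^ 2 := by linarith
  set r := Real.sqrt (v 0 ^ 2 + v 1 ^ 2) with hrdef
  have hrr : Real.sqrt (1 - v 2 ^ 2) = r := by rw [hr2]
  have rhs0 : (WithLp.toLp 2 ![0, Real.sqrt (1 - v 2 ^ 2), v 2] : EuclideanSpace ℝ (Fin 3)) 0 = 0 := rfl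
  have rhs1 : (WithLp.toLp 2 ![0, Real.sqrt (1 - v 2 ^ 2), v 2] : EuclideanSpace ℝ (Fin 3)) 1
      = Real.sqrt (1 - v 2 ^ 2) := rfl
  have rhs2 : (WithLp.toLp 2 ![0, Real.sqrt (1 - v 2 ^ 2), v 2] : EuclideanSpace ℝ (Fin 3)) 2 = v 2 := rfl
  have hrnn : 0 ≤ r := hrdef ▸ Real.sqrt_nonneg _
  have hrsq : r ^ 2 = v 0 ^ 2 + v 1 ^ 2 := by rw [hrdef]; exact Real.sq_sqrt (by positivity)
  rcases eq_or_lt_of_le hrnn with hr0 | hrpos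
  · have h00 : v 0 ^ 2 + v 1 ^ 2 = 0 := by nlinarith [hrsq]
    have hv0 : v 0 = 0 := by nlinarith
    have hv1 : v 1 = 0 := by nlinarith
    refine ⟨0, ?_⟩
    rw [rotZ_zero]
    apply vext
    · rw [rhs0, hv0]
    · rw [rhs1, hrr, hv1, hr0]
    · rw [rhs2]
  · have hrne : r ≠ 0 := ne_of_gt hrpos
    set c : ℂ := ⟨v 0, v 1⟩ with hc
    have habs : ‖c‖ = r := by
      rw [Complex.norm_def, hc, Complex.normSq_mk, hrdef]; ring_nf
    have hc0 : c ≠ 0 := by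
      intro h
      rw [h] at habs
      simp at habs
      exact hrne habs.symm
    have hcos : Real.cos (Complex.arg c) = v 0 / r := by
      rw [Complex.cos_arg hc0, habs]
    have hsin : Real.sin (Complex.arg c) = v 1 / r := by
      rw [Complex.sin_arg, habs]
    refine ⟨Real.pi / 2 - Complex.arg c, ?_⟩
    apply vext
    · rw [rotZ0, rhs0, Real.cos_pi_div_two_sub, Real.sin_pi_div_two_sub, hcos, hsin]
      field_simp
      ring
    · rw [rotZ1, rhs1, hrr, Real.cos_pi_div_two_sub, Real.sin_pi_div_two_sub, hcos, hsin]
      field_simp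
      nlinarith [hrsq]
    · rw [rotZ2, rhs2]

lemma reach {p q : EuclideanSpace ℝ (Fin 3)} (hp : p ∈ sphere (0:EuclideanSpace ℝ (Fin 3)) 1)
    (hq : q ∈ sphere (0:EuclideanSpace ℝ (Fin 3)) 1) :
    ∃ a b c, rotZ a (rotX b (rotZ c p)) = q := by
  obtain ⟨cp, hcp⟩ := polar hp
  obtain ⟨aq, haq⟩ := polar hq
  have hp2 := coord_le_one p hp 2
  have hq2 := coord_le_one q hq 2
  rw [abs_le] at hp2 hq2
  set θp := Real.arccos (p 2) with hθp
  set θq := Real.arccos (q 2) with hθq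
  have hsp : Real.sqrt (1 - p 2 ^ 2) = Real.sin θp := (Real.sin_arccos _).symm
  have hcp2 : Real.cos θp = p 2 := Real.cos_arccos hp2.1 hp2.2
  have hsq : Real.sqrt (1 - q 2 ^ 2) = Real.sin θq := (Real.sin_arccos _).symm
  have hcq2 : Real.cos θq = q 2 := Real.cos_arccos hq2.1 hq2.2
  refine ⟨-aq, θp - θq, cp, ?_⟩
  rw [hcp]
  have hmid : rotX (θp - θq) (WithLp.toLp 2 ![0, Real.sqrt (1 - p 2 ^ 2), p 2] : EuclideanSpace ℝ (Fin 3))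
      = (WithLp.toLp 2 ![0, Real.sqrt (1 - q 2 ^ 2), q 2] : EuclideanSpace ℝ (Fin 3)) := by
    apply vext
    · rfl
    · rw [rotX1]
      show Real.sqrt (1 - p 2 ^2) * Real.cos (θp - θq) - p 2 * Real.sin (θp - θq)
          = Real.sqrt (1 - q 2 ^ 2)
      rw [hsp, hsq, ← hcp2, Real.sin_sub, Real.cos_sub]
      linear_combination Real.sin θq * Real.sin_sq_add_cos_sq θp
    · rw [rotX2]
      show Real.sqrt (1 - p 2 ^2) * Real.sin (θp - θq) + p 2 * Real.cos (θp - θq) = q 2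
      rw [hsp, ← hcp2, ← hcq2, Real.sin_sub, Real.cos_sub]
      linear_combination Real.cos θq * Real.sin_sq_add_cos_sq θp
  rw [hmid, ← haq, rotZ_rotZ]
  simp [rotZ_zero]

lemma key_minimal {γ₁ γ₂ : ℝ} (h₁ : Irrational γ₁) (h₂ : Irrational γ₂)
    {C : Set (EuclideanSpace ℝ (Fin 3))} (hne : C.Nonempty) (hcl : IsClosed C)
    (hsub : C ⊆ Metric.sphere 0 1)
    (hz : rotZ (2 * Real.pi * γ₁) '' C ⊆ C) (hx : rotX (2 * Real.pi * γ₂) '' C ⊆ C) :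
    C = Metric.sphere 0 1 := by
  apply Set.Subset.antisymm hsub
  intro q hq
  obtain ⟨p, hp⟩ := hne
  obtain ⟨a, b, c, habc⟩ := reach (hsub hp) hq
  rw [← habc]
  exact rotZ_all h₁ hcl hsub hz a (rotX_all h₂ hcl hsub hx b (rotZ_all h₁ hcl hsub hz c hp))


/-- The IFS on the unit sphere `S² ⊆ ℝ³` generated by the rotation about the `z`-axis by
angle `2πγ₁` and the rotation about the `x`-axis by angle `2πγ₂`, with `γ₁, γ₂`
irrational, is minimal; and so is the IFS generated by the inverse rotations. -/
theorem sphere_rotations_minimal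
    (γ₁ γ₂ : ℝ) (h₁ : Irrational γ₁) (h₂ : Irrational γ₂) :
    (∀ C : Set (EuclideanSpace ℝ (Fin 3)), C.Nonempty → IsClosed C →
      C ⊆ Metric.sphere 0 1 →
      rotZ (2 * Real.pi * γ₁) '' C ⊆ C → rotX (2 * Real.pi * γ₂) '' C ⊆ C →
      C = Metric.sphere 0 1) ∧
    (∀ C : Set (EuclideanSpace ℝ (Fin 3)), C.Nonempty → IsClosed C →
      C ⊆ Metric.sphere 0 1 →
      rotZ (-(2 * Real.pi * γ₁)) '' C ⊆ C → rotX (-(2 * Real.pi * γ₂)) '' C ⊆ C →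
      C = Metric.sphere 0 1) := by
  constructor
  · intro C hne hcl hsub hz hx
    exact key_minimal h₁ h₂ hne hcl hsub hz hx
  · intro C hne hcl hsub hz hx
    refine key_minimal h₁.neg h₂.neg hne hcl hsub ?_ ?_
    · rw [show 2 * Real.pi * (-γ₁) = -(2 * Real.pi * γ₁) from by ring]; exact hz
    · rw [show 2 * Real.pi * (-γ₂) = -(2 * Real.pi * γ₂) from by ring]; exact hx
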